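/- Let D be a digraph, v a vertex, and D_k the digraph obtained from D by adding k new vertices v_1,...,v_k and arcs (v,v_1),...,(v,v_k). Then D has a Hamiltonian directed path terminating at v if and only if D_k has an out-branching with at most k leaves. -/

import Mathlib

/-- `T` is an out-branching (spanning out-tree) of the digraph `D`, rooted at `r`:
`T` is a subdigraph of `D`, `r` has in-degree 0 in `T`, every other vertex has
in-degree exactly 1 in `T`, and every vertex is reachable from `r` in `T`. -/
def IsOutBranching {α : Type*} (D T : α → α → Prop) (r : α) : Prop :=
  (∀ u v, T u v → D u v) ∧ (∀ u, ¬ T u r) ∧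
  (∀ v, v ≠ r → ∃! u, T u v) ∧ (∀ v, Relation.ReflTransGen T r v)

/-- The number of leaves (vertices of out-degree 0) of `T`. -/
noncomputable def numLeaves {α : Type*} (T : α → α → Prop) : ℕ :=
  {v | ∀ w, ¬ T v w}.ncard

/-- The number of internal vertices (vertices of positive out-degree) of `T`. -/
noncomputable def numInternal {α : Type*} (T : α → α → Prop) : ℕ :=
  {v | ∃ w, T v w}.ncard

open Relation

/-- In an out-branching (in-degree conditions), no vertex reachable from the root
lies on a cycle. -/
lemma aux_no_cycle {α : Type*} (T : α → α → Prop) (ρ : α)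
    (hroot : ∀ u, ¬ T u ρ) (huniq : ∀ b, b ≠ ρ → ∃! a, T a b) :
    ∀ b, ReflTransGen T ρ b → ¬ TransGen T b b := by
  intro b hb
  induction hb with
  | refl =>
    intro h
    obtain ⟨u, -, hu⟩ := TransGen.tail'_iff.mp h
    exact hroot u hu
  | @tail c b' hρc hcb ih =>
    intro h
    have hbne : b' ≠ ρ := fun he => hroot _ (he ▸ hcb)
    obtain ⟨u, hbu, hub⟩ := TransGen.tail'_iff.mp h
    obtain ⟨w, hw, hwu⟩ := huniq b' hbne
    have h1 : u = c := (hwu u hub).trans (hwu c hcb).symm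
    subst h1
    exact ih (TransGen.head' hcb hbu)

/-- Let `D_k` be obtained from `D` by adding `k` new vertices `v_1, …, v_k` (the
summand `Fin k`) and the arcs `(v, v_i)`. Then `D` has a Hamiltonian directed path
terminating at `v` iff `D_k` has an out-branching with at most `k` leaves. -/
theorem stmt_6 {V : Type*} [Fintype V] (D : V → V → Prop) (v : V) (k : ℕ) (hk : 1 ≤ k) :
    (∃ l : List V, l.Chain' D ∧ l.Nodup ∧ (∀ x : V, x ∈ l) ∧ l.getLast? = some v) ↔
      (∃ (T : (V ⊕ Fin k) → (V ⊕ Fin k) → Prop) (ρ : V ⊕ Fin k),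
        IsOutBranching
          (fun a b => (∃ x y, D x y ∧ a = Sum.inl x ∧ b = Sum.inl y) ∨
            (a = Sum.inl v ∧ ∃ i : Fin k, b = Sum.inr i)) T ρ ∧
        numLeaves T ≤ k) := by
  constructor
  · -- Forward direction
    rintro ⟨l, hc, hn, hm, hl⟩
    have hne : l ≠ [] := List.ne_nil_of_mem (hm v)
    set T : (V ⊕ Fin k) → (V ⊕ Fin k) → Prop := fun a b =>
      (∃ n : ℕ, ∃ x y : V, l[n]? = some x ∧ l[n+1]? = some y ∧
        a = Sum.inl x ∧ b = Sum.inl y) ∨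
      (a = Sum.inl v ∧ ∃ i : Fin k, b = Sum.inr i) with hT
    have hinj : ∀ (n m : ℕ) (x : V), l[n]? = some x → l[m]? = some x → n = m := by
      intro n m x hx hy
      have h1 : n < l.length := by
        rcases List.getElem?_eq_some_iff.mp hx with ⟨h, -⟩; exact h
      exact (List.getElem?_inj h1 hn).mp (hx.trans hy.symm)
    have hhead : l[0]? = some (l.head hne) := by
      rw [← List.head?_eq_head hne]
      exact (List.head?_eq_getElem? (l := l)).symm ▸ rfl
    refine ⟨T, Sum.inl (l.head hne), ⟨?_, ?_, ?_, ?_⟩, ?_⟩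
    · -- subdigraph
      rintro a b (⟨n, x, y, hx, hy, rfl, rfl⟩ | ⟨rfl, i, rfl⟩)
      · left
        refine ⟨x, y, ?_, rfl, rfl⟩
        have h2 : n + 1 < l.length := by
          rcases List.getElem?_eq_some_iff.mp hy with ⟨h, -⟩; exact h
        have h3 : n < l.length - 1 := by omega
        have := List.isChain_iff_getElem.mp hc n (by omega)
        have hx' : l.get ⟨n, by omega⟩ = x := by
          have := List.getElem?_eq_getElem (l := l) (show n < l.length by omega)
          rw [this] at hx
          simpa using hx
        have hy' : l.get ⟨n + 1, by omega⟩ = y := by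
          have := List.getElem?_eq_getElem (l := l) h2
          rw [this] at hy
          simpa using hy
        simp only [List.get_eq_getElem] at hx' hy'
        rwa [hx', hy'] at this
      · right; exact ⟨rfl, i, rfl⟩
    · -- root has in-degree 0
      rintro u (⟨n, x, y, hx, hy, rfl, hy'⟩ | ⟨rfl, i, hi⟩)
      · have : y = l.head hne := by
          have := Sum.inl.inj hy'; exact this.symm
        subst this
        have := hinj (n+1) 0 _ hy hhead
        omega
      · simp at hi
    · -- unique in-neighbor
      rintro (y | i) hb
      · obtain ⟨n, hny⟩ := List.mem_iff_getElem?.mp (hm y)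
        have hn0 : n ≠ 0 := by
          rintro rfl
          apply hb
          rw [hhead] at hny
          simp_all
        obtain ⟨m, rfl⟩ := Nat.exists_eq_succ_of_ne_zero hn0
        have hmlt : m < l.length := by
          rcases List.getElem?_eq_some_iff.mp hny with ⟨h, -⟩; omega
        refine ⟨Sum.inl (l[m]), Or.inl ⟨m, l[m], y, List.getElem?_eq_getElem hmlt, hny, rfl, rfl⟩, ?_⟩
        rintro u (⟨n', x', y', hx', hy', rfl, hy''⟩ | ⟨rfl, i, hi⟩)
        · have : y' = y := (Sum.inl.inj hy'').symm
          subst this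
          have := hinj (n' + 1) (m + 1) _ hy' hny
          have hn'm : n' = m := by omega
          subst hn'm
          congr 1
          have := List.getElem?_eq_getElem (l := l) (show n' < l.length from hmlt)
          rw [this] at hx'
          simpa using hx'.symm
        · simp at hi
      · refine ⟨Sum.inl v, Or.inr ⟨rfl, i, rfl⟩, ?_⟩
        rintro u (⟨n', x', y', hx', hy', rfl, hy''⟩ | ⟨rfl, -, -⟩)
        · simp at hy''
        · rfl
    · -- reachability
      have key : ∀ (n : ℕ) (x : V), l[n]? = some x →
          ReflTransGen T (Sum.inl (l.head hne)) (Sum.inl x) := by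
        intro n
        induction n with
        | zero =>
          intro x hx
          rw [hhead] at hx
          rw [Option.some.inj hx]
        | succ m ih =>
          intro x hx
          have hmlt : m < l.length := by
            rcases List.getElem?_eq_some_iff.mp hx with ⟨h, -⟩; omega
          have := ih (l[m]) (List.getElem?_eq_getElem hmlt)
          exact this.tail (Or.inl ⟨m, l[m], x, List.getElem?_eq_getElem hmlt, hx, rfl, rfl⟩)
      rintro (y | i)
      · obtain ⟨n, hny⟩ := List.mem_iff_getElem?.mp (hm y)
        exact key n y hny
      · obtain ⟨n, hnv⟩ := List.mem_iff_getElem?.mp (hm v)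
        exact (key n v hnv).tail (Or.inr ⟨rfl, i, rfl⟩)
    · -- at most k leaves
      have hsub : {w : V ⊕ Fin k | ∀ u, ¬ T w u} ⊆ Set.range Sum.inr := by
        rintro (x | i) hw
        · exfalso
          obtain ⟨n, hnx⟩ := List.mem_iff_getElem?.mp (hm x)
          have hnlt : n < l.length := by
            rcases List.getElem?_eq_some_iff.mp hnx with ⟨h, -⟩; exact h
          by_cases hxv : x = v
          · exact hw (Sum.inr ⟨0, hk⟩) (Or.inr ⟨by rw [hxv], ⟨0, hk⟩, rfl⟩)
          · have hlast : l.getLast? = l[l.length - 1]? := by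
              rw [List.getLast?_eq_getElem?]
            have hn1 : n + 1 < l.length := by
              rcases Nat.lt_or_ge (n+1) l.length with h | h
              · exact h
              · exfalso
                have : n = l.length - 1 := by omega
                subst this
                rw [hl] at hlast
                rw [hnx] at hlast
                exact hxv (Option.some.inj hlast.symm)
            exact hw (Sum.inl (l[n+1])) (Or.inl ⟨n, x, l[n+1], hnx,
              List.getElem?_eq_getElem hn1, rfl, rfl⟩)
        · exact ⟨i, rfl⟩
      have hcard : (Set.range (Sum.inr : Fin k → V ⊕ Fin k)).ncard = k := by
        rw [← Set.image_univ, Set.ncard_image_of_injective _ Sum.inr_injective,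
          Set.ncard_univ]
        simp
      calc numLeaves T ≤ (Set.range (Sum.inr : Fin k → V ⊕ Fin k)).ncard :=
            Set.ncard_le_ncard hsub (Set.toFinite _)
        _ = k := hcard
  · -- Backward direction
    rintro ⟨T, ρ, ⟨hsub, hroot, huniq, hreach⟩, hleaves⟩
    have harc_inr : ∀ (i : Fin k) b, ¬ T (Sum.inr i) b := by
      intro i b h
      rcases hsub _ _ h with ⟨x, y, -, hx, -⟩ | ⟨hx, -⟩ <;> simp at hx
    have harc_to_inr : ∀ a (i : Fin k), T a (Sum.inr i) → a = Sum.inl v := by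
      intro a i h
      rcases hsub _ _ h with ⟨x, y, -, -, hy⟩ | ⟨hx, -⟩
      · simp at hy
      · exact hx
    have harc_to_inl : ∀ a (y : V), T a (Sum.inl y) → ∃ x, a = Sum.inl x ∧ D x y := by
      intro a y h
      rcases hsub _ _ h with ⟨x, y', hD, hx, hy⟩ | ⟨-, i, hi⟩
      · exact ⟨x, hx, by rwa [← Sum.inl.inj hy] at hD⟩
      · simp at hi
    have hacyc : ∀ b, ¬ TransGen T b b :=
      fun b => aux_no_cycle T ρ hroot huniq b (hreach b)
    -- every vertex of V is internal
    have hnotleaf : ∀ x : V, ∃ w, T (Sum.inl x) w := by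
      by_contra hcon
      push_neg at hcon
      obtain ⟨x, hx⟩ := hcon
      have hsub2 : insert (Sum.inl x) (Set.range (Sum.inr : Fin k → V ⊕ Fin k)) ⊆
          {w : V ⊕ Fin k | ∀ u, ¬ T w u} := by
        rintro w (rfl | ⟨i, rfl⟩)
        · exact hx
        · exact fun u => harc_inr i u
      have hcard : (insert (Sum.inl x) (Set.range (Sum.inr : Fin k → V ⊕ Fin k))).ncard
          = k + 1 := by
        rw [Set.ncard_insert_of_notMem (by simp) (Set.toFinite _),
          ← Set.image_univ, Set.ncard_image_of_injective _ Sum.inr_injective,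
          Set.ncard_univ]
        simp
      have : k + 1 ≤ numLeaves T := by
        rw [← hcard]
        exact Set.ncard_le_ncard hsub2 (Set.toFinite _)
      omega
    have hsucc : ∀ x : V, x ≠ v → ∃ y : V, T (Sum.inl x) (Sum.inl y) := by
      intro x hxv
      obtain ⟨w, hw⟩ := hnotleaf x
      rcases w with y | i
      · exact ⟨y, hw⟩
      · exact absurd (Sum.inl.inj (harc_to_inr _ _ hw)) hxv
    -- well-foundedness of the "descendant" relation
    haveI : IsTrans (V ⊕ Fin k) (Function.swap (TransGen T)) :=
      ⟨fun _ _ _ h1 h2 => h2.trans h1⟩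
    haveI : IsIrrefl (V ⊕ Fin k) (Function.swap (TransGen T)) := ⟨fun a => hacyc a⟩
    have hwf := Finite.wellFounded_of_trans_of_irrefl (Function.swap (TransGen T))
    -- every vertex of V reaches v
    have hto_v : ∀ x : V, ReflTransGen T (Sum.inl x) (Sum.inl v) := by
      have key : ∀ b : V ⊕ Fin k, ∀ x : V, b = Sum.inl x →
          ReflTransGen T b (Sum.inl v) := by
        intro b
        refine hwf.induction
          (C := fun b => ∀ x : V, b = Sum.inl x → ReflTransGen T b (Sum.inl v)) b ?_
        rintro b ih x rfl
        by_cases hxv : x = v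
        · subst hxv; exact ReflTransGen.refl
        · obtain ⟨y, hy⟩ := hsucc x hxv
          exact ReflTransGen.head hy (ih (Sum.inl y) (TransGen.single hy) y rfl)
      exact fun x => key (Sum.inl x) x rfl
    -- build the path from the root down to any vertex
    have hpath : ∀ b, ReflTransGen T ρ b → ∀ y : V, b = Sum.inl y →
        ∃ l : List V, l.Chain' D ∧ l.Nodup ∧ l.getLast? = some y ∧
          (∀ z : V, z ∈ l ↔ ReflTransGen T (Sum.inl z) (Sum.inl y)) := by
      intro b hb
      induction hb with
      | refl =>
        intro y hy
        refine ⟨[y], List.isChain_singleton y, by simp, by simp, ?_⟩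
        intro z
        simp only [List.mem_singleton]
        constructor
        · rintro rfl; exact ReflTransGen.refl
        · intro hz
          rcases ReflTransGen.cases_tail hz with h | ⟨u, -, hub⟩
          · exact (Sum.inl.inj h).symm
          · exact absurd (hy ▸ hub) (hroot u)
      | @tail b c hb hbc ih =>
        rintro y rfl
        have hcρ : Sum.inl y ≠ ρ := fun h => hroot _ (h ▸ hbc)
        obtain ⟨x, rfl, hD⟩ := harc_to_inl _ _ hbc
        obtain ⟨l, hcl, hnl, hlast, hmem⟩ := ih x rfl
        have hbu : ∀ u, T u (Sum.inl y) → u = Sum.inl x := by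
          intro u hu
          obtain ⟨w, -, hwu⟩ := huniq _ hcρ
          exact (hwu u hu).trans (hwu _ hbc).symm
        have hynl : y ∉ l := by
          intro hyl
          exact hacyc (Sum.inl y) (TransGen.tail' ((hmem y).1 hyl) hbc)
        refine ⟨l ++ [y], ?_, ?_, ?_, ?_⟩
        · rw [List.Chain', List.isChain_append]
          refine ⟨hcl, List.isChain_singleton y, ?_⟩
          intro a ha b hb
          rw [hlast] at ha
          simp at ha hb
          rw [← ha, ← hb]
          exact hD
        · simp [List.nodup_append, hnl, hynl]
          rintro a ha rfl; exact hynl ha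
        · simp [List.getLast?_concat]
        · intro z
          simp only [List.mem_append, List.mem_singleton, hmem]
          constructor
          · rintro (hz | rfl)
            · exact hz.tail hbc
            · exact ReflTransGen.refl
          · intro hz
            rcases ReflTransGen.cases_tail hz with h | ⟨u, hu, hub⟩
            · right; exact (Sum.inl.inj h).symm
            · left; rwa [hbu u hub] at hu
    obtain ⟨l, hcl, hnl, hlast, hmem⟩ := hpath (Sum.inl v) (hreach _) v rfl
    exact ⟨l, hcl, hnl, fun x => (hmem x).2 (hto_v x), hlast⟩
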